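/- Let X be a finite nonempty set, θ : X → ℝ, and Z = Σ_{x∈X} exp(θ(x)). Let {γ(x)}_{x∈X} be independent real random variables, each distributed according to the zero-mean Gumbel distribution. Then the random variable M = max_{x∈X} (θ(x) + γ(x)) is Gumbel distributed with location log Z: for every t ∈ ℝ, P[M ≤ t] = exp(−exp(−(t − log Z + c))), where c is the Euler–Mascheroni constant. -/

import Mathlib

open MeasureTheory Real ProbabilityTheory

theorem perturbed_max_gumbel_log_partition
    {X : Type*} [Fintype X] [Nonempty X] (θ : X → ℝ)
    {Ω : Type*} [MeasurableSpace Ω] (P : Measure Ω) [IsProbabilityMeasure P]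
    (γ : X → Ω → ℝ) (hmeas : ∀ x, Measurable (γ x))
    (hindep : iIndepFun γ P)
    (hcdf : ∀ x t, P {ω | γ x ω ≤ t} =
      ENNReal.ofReal (exp (-exp (-(t + eulerMascheroniConstant))))) :
    ∀ t : ℝ,
      P {ω | (⨆ x : X, (θ x + γ x ω)) ≤ t} =
        ENNReal.ofReal
          (exp (-exp (-(t - Real.log (∑ x : X, exp (θ x)) + eulerMascheroniConstant)))) := by
  intro t
  have hset : {ω | (⨆ x : X, (θ x + γ x ω)) ≤ t}
      = ⋂ x : X, {ω | γ x ω ≤ t - θ x} := by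
    ext ω
    simp only [Set.mem_iInter, Set.mem_setOf_eq]
    rw [ciSup_le_iff (Set.Finite.bddAbove (Set.finite_range _))]
    constructor
    · intro h x; linarith [h x]
    · intro h x; linarith [h x]
  rw [hset]
  have : (⋂ x : X, {ω | γ x ω ≤ t - θ x}) = ⋂ x : X, γ x ⁻¹' Set.Iic (t - θ x) := rfl
  rw [this, hindep.meas_iInter (fun x => ⟨Set.Iic (t - θ x), measurableSet_Iic, rfl⟩)]
  simp only [show ∀ x, γ x ⁻¹' Set.Iic (t - θ x) = {ω | γ x ω ≤ t - θ x} from fun _ => rfl, hcdf]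
  have hpos : ∀ x : X, (0:ℝ) < exp (-exp (-(t - θ x + eulerMascheroniConstant))) :=
    fun x => exp_pos _
  rw [← ENNReal.ofReal_prod_of_nonneg (fun x _ => (hpos x).le)]
  congr 1
  rw [← Real.exp_sum]
  congr 1
  have hZ : (0:ℝ) < ∑ x : X, exp (θ x) :=
    Finset.sum_pos (fun x _ => exp_pos _) Finset.univ_nonempty
  rw [Finset.sum_neg_distrib]
  congr 1
  have : exp (-(t - Real.log (∑ x : X, exp (θ x)) + eulerMascheroniConstant))
      = (∑ x : X, exp (θ x)) * exp (-(t + eulerMascheroniConstant)) := by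
    rw [show -(t - Real.log (∑ x : X, exp (θ x)) + eulerMascheroniConstant)
        = Real.log (∑ x : X, exp (θ x)) + (-(t + eulerMascheroniConstant)) by ring,
      Real.exp_add, Real.exp_log hZ]
  rw [this, Finset.sum_mul]
  refine Finset.sum_congr rfl fun x _ => ?_
  rw [← Real.exp_add]
  congr 1
  ring
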